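/- Let W be a Coxeter group with simple reflections S = {s_1,…,s_k}, let U_L = {w ∈ W : ℓ(w) ≤ L}, and for 1 ≤ i ≤ k set U_{L+1,i} = {w ∈ W : s_i w ∈ U_L} and W_{L+1,j} = U_L ∪ U_{L+1,1} ∪ ⋯ ∪ U_{L+1,j}. Then (a) each W_{L+1,j} is a stack, (b) U_{L+1,j+1} ⊆ W_{L+1,j}⁺(s_{j+1}) for each 0 ≤ j ≤ k-1, and (c) W_{L+1,k} = {w ∈ W : ℓ(w) ≤ L+1}. -/
import Mathlib


/-- Let `W` be a Coxeter group with simple reflections `s_1, …, s_k`, let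
`U_L = {w : ℓ(w) ≤ L}`, `U_{L+1,i} = {w : s_i w ∈ U_L}` and
`W_{L+1,j} = U_L ∪ U_{L+1,1} ∪ ⋯ ∪ U_{L+1,j}`. Then (a) each `W_{L+1,j}` is a stack,
(b) `U_{L+1,j+1} ⊆ W_{L+1,j}⁺(s_{j+1})` for each `0 ≤ j ≤ k-1`, and
(c) `W_{L+1,k} = {w : ℓ(w) ≤ L+1}`. -/
theorem stacks_fold_step {k : ℕ} {W : Type*} [Group W]
    (M : CoxeterMatrix (Fin k)) (cs : CoxeterSystem M W) (L : ℕ)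
    (UL : Set W) (hUL : UL = {w : W | cs.length w ≤ L})
    (Uc : Fin k → Set W) (hUc : ∀ i, Uc i = {w : W | cs.simple i * w ∈ UL})
    (WL : ℕ → Set W)
    (hWL : ∀ j, WL j = UL ∪ ⋃ (i : Fin k) (_ : (i : ℕ) < j), Uc i) :
    (∀ j, ∀ w ∈ WL j, ∀ i : Fin k,
        cs.length (cs.simple i * w) < cs.length w → cs.simple i * w ∈ WL j) ∧
    (∀ j : Fin k, Uc j ⊆ {w : W |
        (if cs.length (cs.simple j * w) < cs.length w then cs.simple j * w else w) ∈
          WL (j : ℕ)}) ∧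
    WL k = {w : W | cs.length w ≤ L + 1} := by
  subst hUL
  refine ⟨?_, ?_, ?_⟩
  · intro j w hw i hlt
    rw [hWL] at hw ⊢
    left
    rcases hw with hw | hw
    · exact le_trans (le_of_lt hlt) hw
    · simp only [Set.mem_iUnion] at hw
      obtain ⟨i', hi', hwi'⟩ := hw
      rw [hUc] at hwi'
      have h2 : cs.length w ≤ cs.length (cs.simple i' * w) + 1 := by
        rcases cs.length_simple_mul w i' with h | h <;> omega
      simp only [Set.mem_setOf_eq] at hwi' ⊢
      omega
  · intro j w hw
    rw [hUc] at hw
    simp only [Set.mem_setOf_eq] at hw ⊢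
    rw [hWL]
    split_ifs with h
    · exact Or.inl hw
    · left
      rcases cs.length_simple_mul w j with h' | h' <;> simp only [Set.mem_setOf_eq] <;> omega
  · rw [hWL]
    ext w
    simp only [Set.mem_union, Set.mem_iUnion, Set.mem_setOf_eq]
    constructor
    · rintro (h | ⟨i, hi, h⟩)
      · omega
      · rw [hUc] at h
        simp only [Set.mem_setOf_eq] at h
        rcases cs.length_simple_mul w i with h' | h' <;> omega
    · intro h
      rcases le_or_gt (cs.length w) L with h' | h'
      · exact Or.inl h'
      · have hw1 : w ≠ 1 := by
          intro he; rw [he, cs.length_one] at h'; omega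
        obtain ⟨i, hi⟩ := cs.exists_leftDescent_of_ne_one hw1
        right
        refine ⟨i, i.isLt, ?_⟩
        rw [hUc]
        simp only [Set.mem_setOf_eq]
        have := hi
        unfold CoxeterSystem.IsLeftDescent at this
        omega
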